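/- Let (i,B,α) be an A-dynamical system and E : B → A an α-expectation, with associated map φ = E∘α|_A. If k ∈ ker E (i.e., E(BkB) = {0}), then α(k) ∈ ker E. Hence ker E is an α-invariant closed two-sided ideal of B. -/

import Mathlib

set_option linter.unusedSectionVars false
open scoped ComplexOrder

variable {B : Type*} [NonUnitalNormedRing B] [StarRing B] [CStarRing B]
  [NormedSpace ℂ B] [IsScalarTower ℂ B B] [SMulCommClass ℂ B B] [StarModule ℂ B]
  [CompleteSpace B] [PartialOrder B] [StarOrderedRing B]

noncomputable local instance : NonUnitalCStarAlgebra B :=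
  { ‹NonUnitalNormedRing B›, ‹StarRing B›, ‹CStarRing B›, ‹NormedSpace ℂ B›,
    ‹IsScalarTower ℂ B B›, ‹SMulCommClass ℂ B B›, ‹StarModule ℂ B›, ‹CompleteSpace B› with }

lemma real_smul_eq (r : ℝ) (x : B) : r • x = (r : ℂ) • x := by
  rw [show ((r:ℂ)) = r • (1:ℂ) by simp [Complex.real_smul], smul_assoc, one_smul]

noncomputable local instance : StarModule ℝ B where
  star_smul r x := by
    rw [real_smul_eq, star_smul, Complex.star_def, Complex.conj_ofReal, ← real_smul_eq,
      star_trivial r]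

/-- The hereditary subalgebra `[ABA]` generated by `A` in `B`: the closed linear
span of `{a x b : a, b ∈ A, x ∈ B}`. -/
def hereditarySpan (A : NonUnitalStarSubalgebra ℂ B) : Set B :=
  closure (Submodule.span ℂ {z : B | ∃ a ∈ A, ∃ b ∈ A, ∃ x : B, z = a * x * b} : Set B)

/-- A conditional expectation of `B` onto the C*-subalgebra `A`: an idempotent
positive `A`-bimodule map with range `A`. -/
def IsCondExp (A : NonUnitalStarSubalgebra ℂ B) (E : B →L[ℂ] B) : Prop :=
  (∀ x, E x ∈ A) ∧ (∀ a ∈ A, E a = a) ∧ (∀ x : B, 0 ≤ x → 0 ≤ E x) ∧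
  (∀ a ∈ A, ∀ x, E (a * x) = a * E x) ∧ (∀ a ∈ A, ∀ x, E (x * a) = E x * a)

/-- The product `α^{n₁}(a₁) ⋯ α^{n_k}(a_k)` associated to a list of pairs
`(nᵢ, aᵢ)` (and `0` for the empty list). -/
def prodOf (α : B → B) : List (ℕ × B) → B
  | [] => 0
  | p :: rest => rest.foldl (fun acc q => acc * (α^[q.1] q.2)) (α^[p.1] p.2)

/-- `(A, B, α)` is an `A`-dynamical system: `B` is the closed linear span of the
finite products `α^{n₁}(a₁) ⋯ α^{n_k}(a_k)` with `aᵢ ∈ A`, `nᵢ ≥ 0`. -/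
def IsDynSystem (A : NonUnitalStarSubalgebra ℂ B) (α : B →⋆ₙₐ[ℂ] B) : Prop :=
  (Submodule.span ℂ {x : B | ∃ l : List (ℕ × B), l ≠ [] ∧ (∀ p ∈ l, p.2 ∈ A) ∧
    x = prodOf (⇑α) l}).topologicalClosure = ⊤

/-- An `α`-expectation: a conditional expectation `E : B → A` satisfying the
equivariance axiom (E1) `E ∘ α = E ∘ α ∘ E` and (E2) multiplicativity on the
hereditary subalgebra `[ABA]`. -/
def IsAlphaExpectation (A : NonUnitalStarSubalgebra ℂ B) (α : B →⋆ₙₐ[ℂ] B)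
    (E : B →L[ℂ] B) : Prop :=
  IsCondExp A E ∧ (∀ x, E (α x) = E (α (E x))) ∧
    (∀ x ∈ hereditarySpan A, ∀ y ∈ hereditarySpan A, E (x * y) = E x * E y)


section
variable {A : NonUnitalStarSubalgebra ℂ B} {E : B →L[ℂ] B}

lemma condexp_mono (hE : IsCondExp A E) : Monotone E := by
  intro x y h
  have h0 : (0:B) ≤ E (y - x) := hE.2.2.1 _ (sub_nonneg.2 h)
  rw [map_sub] at h0
  exact sub_nonneg.mp h0

lemma condexp_star (hE : IsCondExp A E) (x : B) : E (star x) = star (E x) := by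
  have hsa : ∀ w : B, IsSelfAdjoint w → IsSelfAdjoint (E w) := by
    intro w hw
    have h1 : (0:B) ≤ E w⁺ := hE.2.2.1 _ (CFC.posPart_nonneg w)
    have h2 : (0:B) ≤ E w⁻ := hE.2.2.1 _ (CFC.negPart_nonneg w)
    have h3 : E w = E w⁺ - E w⁻ := by rw [← map_sub, CFC.posPart_sub_negPart w hw]
    rw [h3]
    exact h1.isSelfAdjoint.sub h2.isSelfAdjoint
  have hre := realPart_add_I_smul_imaginaryPart x
  have hstar : star x = (realPart x : B) - Complex.I • (imaginaryPart x : B) := by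
    conv_lhs => rw [← hre]
    rw [star_add, star_smul]
    simp only [Complex.star_def, Complex.conj_I]
    rw [(realPart x).2.star_eq, (imaginaryPart x).2.star_eq]
    module
  have hR := hsa _ (realPart x).2
  have hI := hsa _ (imaginaryPart x).2
  rw [hstar, map_sub, map_smul]
  conv_rhs => rw [← hre]
  rw [map_add, map_smul, star_add, star_smul]
  simp only [Complex.star_def, Complex.conj_I]
  rw [hR.star_eq, hI.star_eq]
  module

lemma condexp_schwarz (hE : IsCondExp A E) (v : B) :
    star (E v) * E v ≤ E (star v * v) := by
  have h0 : (0:B) ≤ E (star (v - E v) * (v - E v)) := hE.2.2.1 _ (star_mul_self_nonneg _)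
  have hEv : E v ∈ A := hE.1 v
  have hEv' : star (E v) ∈ A := star_mem hEv
  have expand : star (v - E v) * (v - E v)
      = star v * v - star v * E v - star (E v) * v + star (E v) * E v := by
    rw [star_sub]; noncomm_ring
  rw [expand] at h0
  rw [map_add, map_sub, map_sub] at h0
  have e1 : E (star v * E v) = E (star v) * E v := hE.2.2.2.2 _ hEv _
  have e2 : E (star (E v) * v) = star (E v) * E v := hE.2.2.2.1 _ hEv' _
  have e3 : E (star (E v) * E v) = star (E v) * E v := hE.2.1 _ (mul_mem hEv' hEv)
  rw [e1, e2, e3, condexp_star hE] at h0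
  have h0' : (0:B) ≤ E (star v * v) - star (E v) * E v := by
    convert h0 using 1; abel
  exact sub_nonneg.mp h0'

lemma condexp_eq_zero (hE : IsCondExp A E) {v : B} (h : E (star v * v) = 0) : E v = 0 := by
  have h1 : star (E v) * E v ≤ 0 := h ▸ condexp_schwarz hE v
  have h3 : star (E v) * E v = 0 := le_antisymm h1 (star_mul_self_nonneg _)
  have h4 : ‖E v‖ * ‖E v‖ = 0 := by rw [← CStarRing.norm_star_mul_self, h3, norm_zero]
  have := mul_self_eq_zero.mp h4
  simpa using norm_eq_zero.mp this

end

section Hereditary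
variable {A : NonUnitalStarSubalgebra ℂ B} {E : B →L[ℂ] B}

lemma mem_hs (A : NonUnitalStarSubalgebra ℂ B) {a b : B} (x : B) (ha : a ∈ A) (hb : b ∈ A) :
    a * x * b ∈ hereditarySpan A :=
  subset_closure (Submodule.subset_span ⟨a, ha, b, hb, x, rfl⟩)

lemma hs_mul_right {c : B} (hc : c ∈ hereditarySpan A) (y : B) {a : B} (ha : a ∈ A) :
    c * (y * a) ∈ hereditarySpan A := by
  have hmap : Set.MapsTo (fun z : B => z * (y * a))
      (Submodule.span ℂ {z : B | ∃ a ∈ A, ∃ b ∈ A, ∃ x : B, z = a * x * b} : Set B)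
      (Submodule.span ℂ {z : B | ∃ a ∈ A, ∃ b ∈ A, ∃ x : B, z = a * x * b} : Set B) := by
    intro w hw
    induction hw using Submodule.span_induction with
    | mem z hz =>
        obtain ⟨a₁, ha₁, b₁, hb₁, x₁, rfl⟩ := hz
        exact Submodule.subset_span ⟨a₁, ha₁, a, ha, x₁ * (b₁ * y), by noncomm_ring⟩
    | zero => simpa using Submodule.zero_mem _
    | add u v _ _ h1 h2 => simpa [add_mul] using Submodule.add_mem _ h1 h2
    | smul r u _ h1 => simpa [smul_mul_assoc] using Submodule.smul_mem _ r h1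
  exact map_mem_closure (f := fun z : B => z * (y * a)) (continuous_mul_right (y * a)) hc hmap

lemma hs_star {c : B} (hc : c ∈ hereditarySpan A) : star c ∈ hereditarySpan A := by
  have hmap : Set.MapsTo (fun z : B => star z)
      (Submodule.span ℂ {z : B | ∃ a ∈ A, ∃ b ∈ A, ∃ x : B, z = a * x * b} : Set B)
      (Submodule.span ℂ {z : B | ∃ a ∈ A, ∃ b ∈ A, ∃ x : B, z = a * x * b} : Set B) := by
    intro w hw
    induction hw using Submodule.span_induction with
    | mem z hz =>
        obtain ⟨a₁, ha₁, b₁, hb₁, x₁, rfl⟩ := hz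
        refine Submodule.subset_span ⟨star b₁, star_mem hb₁, star a₁, star_mem ha₁, star x₁, ?_⟩
        simp [star_mul, mul_assoc]
    | zero => simpa using Submodule.zero_mem _
    | add u v _ _ h1 h2 => simpa [star_add] using Submodule.add_mem _ h1 h2
    | smul r u _ h1 => simpa [star_smul] using Submodule.smul_mem _ (star r) h1
  exact map_mem_closure (f := fun z : B => star z) continuous_star hc hmap

end Hereditary

-- real smul positivity
lemma real_smul_nonneg {r : ℝ} (hr : 0 ≤ r) {x : B} (hx : 0 ≤ x) : 0 ≤ r • x := by
  have hs : star (CFC.sqrt x) = CFC.sqrt x := (CFC.sqrt_nonneg (a := x)).isSelfAdjoint.star_eq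
  have h2 : star (Real.sqrt r • CFC.sqrt x) * (Real.sqrt r • CFC.sqrt x) = r • x := by
    rw [star_smul, star_trivial, hs, smul_mul_smul_comm, Real.mul_self_sqrt hr,
      CFC.sqrt_mul_sqrt_self x hx]
  exact h2 ▸ star_mul_self_nonneg _

section LemmaH
variable {A : NonUnitalStarSubalgebra ℂ B} {E : B →L[ℂ] B}

lemma lemmaH (hCE : IsCondExp A E)
    (hE2 : ∀ x ∈ hereditarySpan A, ∀ y ∈ hereditarySpan A, E (x * y) = E x * E y)
    {τ : B} (hτC : τ ∈ hereditarySpan A) (hτ : 0 ≤ τ) (hEτ : E τ = 0) (x : B) :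
    E (star x * τ * x) = 0 := by
  have hτsa : IsSelfAdjoint τ := hτ.isSelfAdjoint
  have hτ2 : E (τ * τ) = 0 := by rw [hE2 τ hτC τ hτC, hEτ, mul_zero]
  have step1' : ∀ y : B, E (star y * τ) = 0 := by
    intro y
    apply condexp_eq_zero hCE
    have hv : star (star y * τ) * (star y * τ) = τ * (y * star y) * τ := by
      rw [star_mul, star_star, hτsa.star_eq]; noncomm_ring
    have hb : star τ * (y * star y) * τ ≤ ‖y * star y‖ • (star τ * τ) :=
      CStarAlgebra.star_left_conjugate_le_norm_smul (mul_star_self_nonneg y).isSelfAdjoint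
    rw [hτsa.star_eq] at hb
    have h1 : E (star (star y * τ) * (star y * τ)) ≤ 0 := by
      rw [hv]
      calc E (τ * (y * star y) * τ) ≤ E (‖y * star y‖ • (τ * τ)) := condexp_mono hCE hb
        _ = ‖y * star y‖ • E (τ * τ) := E.map_smul_of_tower _ _
        _ = 0 := by rw [hτ2, smul_zero]
    exact le_antisymm h1 (hCE.2.2.1 _ (star_mul_self_nonneg _))
  have step1 : ∀ y : B, E (τ * y) = 0 := by
    intro y
    have h : τ * y = star (star y * τ) := by rw [star_mul, star_star, hτsa.star_eq]
    rw [h, condexp_star hCE, step1' y, star_zero]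
  have H2 : ∀ w : B, E (star w * (τ * τ) * w) = 0 := by
    intro w
    set σ := E (star w * (τ * τ) * w) with hσdef
    have hσA : σ ∈ A := hCE.1 _
    have hform : star w * (τ * τ) * w = star (τ * w) * (τ * w) := by
      rw [star_mul, hτsa.star_eq]; noncomm_ring
    have hσpos : 0 ≤ σ := by rw [hσdef, hform]; exact hCE.2.2.1 _ (star_mul_self_nonneg _)
    have hσsa : IsSelfAdjoint σ := hσpos.isSelfAdjoint
    set ζ := τ * (w * σ) with hζdef
    have hζC : ζ ∈ hereditarySpan A := hs_mul_right hτC w hσA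
    have hζsC : star ζ ∈ hereditarySpan A := hs_star hζC
    have e2 : star ζ * ζ = σ * (star w * (τ * τ) * w * σ) := by
      rw [hζdef, star_mul, star_mul, hτsa.star_eq, hσsa.star_eq]; noncomm_ring
    have e1 : E (σ * (star w * (τ * τ) * w * σ)) = σ * (σ * σ) := by
      rw [hCE.2.2.2.1 σ hσA, hCE.2.2.2.2 σ hσA, ← hσdef]
    have key : σ * (σ * σ) = 0 := by
      rw [← e1, ← e2, hE2 _ hζsC _ hζC, hζdef, step1 (w * σ), mul_zero]
    have h4 : (σ * σ) * (σ * σ) = 0 := by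
      rw [show (σ*σ)*(σ*σ) = (σ*(σ*σ))*σ by noncomm_ring, key, zero_mul]
    have hsa2 : star (σ * σ) = σ * σ := by rw [star_mul, hσsa.star_eq]
    have n2 : ‖σ * σ‖ = 0 := by
      have := CStarRing.norm_star_mul_self (x := σ * σ)
      rw [hsa2, h4, norm_zero] at this
      nlinarith [norm_nonneg (σ * σ)]
    have n1 : ‖σ‖ = 0 := by
      have := CStarRing.norm_star_mul_self (x := σ)
      rw [hσsa.star_eq, norm_eq_zero.mp n2, norm_zero] at this
      nlinarith [norm_nonneg σ]
    exact norm_eq_zero.mp n1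
  have hq : 0 ≤ E (star x * τ * x) := hCE.2.2.1 _ (star_left_conjugate_nonneg hτ x)
  have hbound : ∀ lam : ℝ, 0 < lam →
      ‖E (star x * τ * x)‖ ≤ lam / 4 * ‖E (star x * x)‖ := by
    intro lam hlam
    set z := (2:ℝ) • (τ * x) - lam • x with hz
    have hzz : star z * z = (4:ℝ) • (star x * (τ * τ) * x)
        - (4*lam) • (star x * τ * x) + (lam*lam) • (star x * x) := by
      rw [hz, star_sub, star_smul, star_smul, star_trivial (2:ℝ), star_trivial lam, star_mul,
        hτsa.star_eq]
      simp only [sub_mul, mul_sub, smul_mul_assoc, mul_smul_comm, smul_smul, mul_assoc,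
        smul_sub, sub_smul]
      module
    have h0 : (0:B) ≤ E (star z * z) := hCE.2.2.1 _ (star_mul_self_nonneg z)
    rw [hzz, map_add, map_sub, E.map_smul_of_tower, E.map_smul_of_tower, E.map_smul_of_tower,
      H2 x, smul_zero, zero_sub] at h0
    have h5 : (4*lam) • E (star x * τ * x) ≤ (lam*lam) • E (star x * x) := by
      have h0' := h0
      rw [neg_add_eq_sub] at h0'
      exact sub_nonneg.mp h0'
    have h6 : 0 ≤ (4*lam) • E (star x * τ * x) := real_smul_nonneg (by positivity) hq
    have h7 : ‖(4*lam) • E (star x * τ * x)‖ ≤ ‖(lam*lam) • E (star x * x)‖ :=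
      CStarAlgebra.norm_le_norm_of_nonneg_of_le h6 h5
    rw [norm_smul, norm_smul, Real.norm_eq_abs, Real.norm_eq_abs,
      abs_of_pos (by positivity), abs_of_pos (by positivity)] at h7
    nlinarith [norm_nonneg (E (star x * x)), norm_nonneg (E (star x * τ * x))]
  have hnorm : ‖E (star x * τ * x)‖ = 0 := by
    by_contra hne
    have hpos' : 0 < ‖E (star x * τ * x)‖ := lt_of_le_of_ne (norm_nonneg _) (Ne.symm hne)
    rcases eq_or_lt_of_le (norm_nonneg (E (star x * x))) with hP | hP
    · have h := hbound 1 one_pos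
      rw [← hP, mul_zero] at h
      exact hne (le_antisymm h (norm_nonneg _))
    · have h := hbound (2 * ‖E (star x * τ * x)‖ / ‖E (star x * x)‖) (by positivity)
      have he : 2 * ‖E (star x * τ * x)‖ / ‖E (star x * x)‖ / 4 * ‖E (star x * x)‖
          = ‖E (star x * τ * x)‖ / 2 := by
        field_simp
        ring
      rw [he] at h
      linarith
  exact norm_eq_zero.mp hnorm

end LemmaH

section Main
variable {A : NonUnitalStarSubalgebra ℂ B} {E : B →L[ℂ] B} {α : B →⋆ₙₐ[ℂ] B}

lemma foldl_mul_assoc (t : ℕ × B → B) (l : List (ℕ × B)) (i z : B) :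
    l.foldl (fun acc q => acc * t q) (i * z) = i * l.foldl (fun acc q => acc * t q) z := by
  induction l generalizing z with
  | nil => rfl
  | cons r l' ih => simp only [List.foldl_cons, mul_assoc, ih]

lemma prodOf_cons (α : B → B) (p q : ℕ × B) (rest : List (ℕ × B)) :
    prodOf α (p :: q :: rest) = α^[p.1] p.2 * prodOf α (q :: rest) := by
  have h1 : prodOf α (p :: q :: rest)
      = (q :: rest).foldl (fun acc r => acc * α^[r.1] r.2) (α^[p.1] p.2) := rfl
  have h2 : prodOf α (q :: rest)
      = rest.foldl (fun acc r => acc * α^[r.1] r.2) (α^[q.1] q.2) := rfl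
  rw [h1, h2, List.foldl_cons, ← foldl_mul_assoc]

lemma ker_mul_right {g : B} (hg : ∀ b c, E (b * g * c) = 0) (y : B) :
    ∀ b c, E (b * (g * y) * c) = 0 := by
  intro b c
  have h : b * (g * y) * c = b * g * (y * c) := by noncomm_ring
  rw [h]; exact hg b (y * c)

lemma ker_E_star_mul_self (hCE : IsCondExp A E) {g : B} (hg : ∀ b c, E (b * g * c) = 0) :
    E (star g * g) = 0 := by
  apply condexp_eq_zero hCE
  have hst : star (star g * g) = star g * g := by rw [star_mul, star_star]
  rw [hst]
  exact hg (star g) (star g * g)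

lemma gen_lemma (hE : IsAlphaExpectation A α E) :
    ∀ (l : List (ℕ × B)), (∀ p ∈ l, p.2 ∈ A) → ∀ g : B, (∀ b c, E (b * g * c) = 0) →
      E (star (prodOf (⇑α) l) * α (star g * g) * prodOf (⇑α) l) = 0 := by
  obtain ⟨hCE, hE1, hE2⟩ := hE
  have hαW : ∀ g' : B, (∀ b c, E (b * g' * c) = 0) → E (α (star g' * g')) = 0 := by
    intro g' hg'
    rw [hE1, ker_E_star_mul_self hCE hg', map_zero, map_zero]
  have hcollapse : ∀ (β g' : B), star (α β) * α (star g' * g') * α β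
      = α (star (g' * β) * (g' * β)) := by
    intro β g'
    rw [← map_star, ← map_mul, ← map_mul]
    congr 1
    rw [star_mul]
    noncomm_ring
  have hEABA : ∀ {a : B}, a ∈ A → ∀ g' : B, (∀ b c, E (b * g' * c) = 0) →
      E (star a * α (star g' * g') * a) = 0 := by
    intro a ha g' hg'
    rw [hCE.2.2.2.2 a ha, hCE.2.2.2.1 (star a) (star_mem ha), hαW g' hg', mul_zero, zero_mul]
  intro l
  induction l with
  | nil => intro _ g hg; simp [prodOf]
  | cons p rest ih =>
    intro hmem g hg
    obtain ⟨n, a⟩ := p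
    have ha : a ∈ A := hmem (n, a) List.mem_cons_self
    cases rest with
    | nil =>
      cases n with
      | zero =>
        have hp : prodOf (⇑α) [(0, a)] = a := by simp [prodOf]
        rw [hp]
        exact hEABA ha g hg
      | succ m =>
        have hp : prodOf (⇑α) [(m + 1, a)] = α (α^[m] a) := by
          simp [prodOf, Function.iterate_succ_apply']
        rw [hp, hcollapse]
        exact hαW _ (ker_mul_right hg _)
    | cons q rest' =>
      have hmem' : ∀ p ∈ q :: rest', p.2 ∈ A := fun p hp => hmem p (List.mem_cons_of_mem _ hp)
      rw [prodOf_cons]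
      cases n with
      | zero =>
        simp only [Function.iterate_zero_apply]
        set u := prodOf (⇑α) (q :: rest') with hu
        have hrearr : star (a * u) * α (star g * g) * (a * u)
            = star u * (star a * α (star g * g) * a) * u := by
          rw [star_mul]; noncomm_ring
        rw [hrearr]
        have hfac : star a * α (star g * g) * a = star (α g * a) * (α g * a) := by
          rw [star_mul, ← map_star, map_mul]; noncomm_ring
        refine lemmaH hCE hE2 ?_ ?_ ?_ u
        · exact mem_hs A (α (star g * g)) (star_mem ha) ha
        · rw [hfac]; exact star_mul_self_nonneg _
        · exact hEABA ha g hg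
      | succ m =>
        have hit : α^[m + 1] a = α (α^[m] a) := Function.iterate_succ_apply' α m a
        rw [hit]
        set β := α^[m] a with hβ
        set u := prodOf (⇑α) (q :: rest') with hu
        have hrearr : star (α β * u) * α (star g * g) * (α β * u)
            = star u * (star (α β) * α (star g * g) * α β) * u := by
          rw [star_mul]; noncomm_ring
        rw [hrearr, hcollapse]
        exact ih hmem' (g * β) (ker_mul_right hg β)

lemma gap_lemma (hE : IsAlphaExpectation A α E) (hdyn : IsDynSystem A α)
    {g : B} (hg : ∀ b c, E (b * g * c) = 0) (c : B) :
    E (star c * α (star g * g) * c) = 0 := by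
  have hCE := hE.1
  have hfac : ∀ d : B, star d * α (star g * g) * d = star (α g * d) * (α g * d) := by
    intro d; rw [star_mul, ← map_star, map_mul]; noncomm_ring
  have hq_nonneg : ∀ d : B, 0 ≤ E (star d * α (star g * g) * d) := by
    intro d; rw [hfac]; exact hCE.2.2.1 _ (star_mul_self_nonneg _)
  have hspan : ∀ x ∈ Submodule.span ℂ {x : B | ∃ l : List (ℕ × B), l ≠ [] ∧
      (∀ p ∈ l, p.2 ∈ A) ∧ x = prodOf (⇑α) l}, E (star x * α (star g * g) * x) = 0 := by
    intro x hx
    induction hx using Submodule.span_induction with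
    | mem z hz =>
      obtain ⟨l, -, hmem, rfl⟩ := hz
      exact gen_lemma hE l hmem g hg
    | zero => simp
    | add u v _ _ h1 h2 =>
      have halg : star (u + v) * α (star g * g) * (u + v)
            + star (u - v) * α (star g * g) * (u - v)
          = (star u * α (star g * g) * u + star u * α (star g * g) * u)
            + (star v * α (star g * g) * v + star v * α (star g * g) * v) := by
        rw [star_add, star_sub]; noncomm_ring
      have hEsum : E (star (u + v) * α (star g * g) * (u + v))
          + E (star (u - v) * α (star g * g) * (u - v)) = 0 := by
        rw [← map_add, halg, map_add, map_add, map_add, h1, h2]; simp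
      have h2' := hq_nonneg (u - v)
      have hle : E (star (u + v) * α (star g * g) * (u + v)) ≤ 0 := by
        have := le_add_of_nonneg_right
          (a := E (star (u + v) * α (star g * g) * (u + v))) h2'
        rwa [hEsum] at this
      exact le_antisymm hle (hq_nonneg (u + v))
    | smul r u _ h1 =>
      have halg : star (r • u) * α (star g * g) * (r • u)
          = (star r * r) • (star u * α (star g * g) * u) := by
        rw [star_smul]
        simp [smul_mul_assoc, mul_smul_comm, smul_smul, mul_comm]
      rw [halg, map_smul, h1, smul_zero]
  have hclosed : IsClosed {x : B | E (star x * α (star g * g) * x) = 0} := by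
    have hcont : Continuous fun x : B => E (star x * α (star g * g) * x) :=
      E.continuous.comp <| (continuous_star.mul continuous_const).mul continuous_id
    exact isClosed_eq hcont continuous_const
  have hc : c ∈ closure (Submodule.span ℂ {x : B | ∃ l : List (ℕ × B), l ≠ [] ∧
      (∀ p ∈ l, p.2 ∈ A) ∧ x = prodOf (⇑α) l} : Set B) := by
    have h1 : c ∈ (Submodule.span ℂ {x : B | ∃ l : List (ℕ × B), l ≠ [] ∧
        (∀ p ∈ l, p.2 ∈ A) ∧ x = prodOf (⇑α) l}).topologicalClosure := by
      rw [hdyn]; trivial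
    exact h1
  exact closure_minimal hspan hclosed hc

end Main

/-- For an `α`-expectation `E` on an `A`-dynamical system, the kernel ideal
`ker E = {x : E(BxB) = 0}` is an `α`-invariant closed two-sided ideal of `B`. -/
theorem alphaExpectation_kernel_invariant (A : NonUnitalStarSubalgebra ℂ B)
    (hA : IsClosed (A : Set B)) (α : B →⋆ₙₐ[ℂ] B) (hdyn : IsDynSystem A α)
    (E : B →L[ℂ] B) (hE : IsAlphaExpectation A α E) :
    (∀ k : B, (∀ b c : B, E (b * k * c) = 0) → ∀ b c : B, E (b * α k * c) = 0) ∧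
      IsClosed {x : B | ∀ b c : B, E (b * x * c) = 0} ∧
      (∃ I : TwoSidedIdeal B, (I : Set B) = {x : B | ∀ b c : B, E (b * x * c) = 0}) := by
  refine ⟨?_, ?_, ?_⟩
  · intro k hk b c
    apply condexp_eq_zero hE.1
    have hsa : IsSelfAdjoint (star b * b) := (star_mul_self_nonneg b).isSelfAdjoint
    have h2 : star (α k) * (star b * b) * α k ≤ ‖star b * b‖ • (star (α k) * α k) :=
      CStarAlgebra.star_left_conjugate_le_norm_smul hsa
    have h3 := star_left_conjugate_le_conjugate h2 c
    have h4 : star c * (‖star b * b‖ • (star (α k) * α k)) * c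
        = ‖star b * b‖ • (star c * (star (α k) * α k) * c) := by
      rw [mul_smul_comm, smul_mul_assoc]
    have h5 : star (b * α k * c) * (b * α k * c)
        = star c * (star (α k) * (star b * b) * α k) * c := by
      rw [star_mul, star_mul]; noncomm_ring
    have h6 : star c * (star (α k) * α k) * c = star c * α (star k * k) * c := by
      rw [← map_star, ← map_mul]
    have hgap := gap_lemma hE hdyn hk c
    have h7 : E (star (b * α k * c) * (b * α k * c)) ≤ 0 := by
      rw [h5]
      calc E (star c * (star (α k) * (star b * b) * α k) * c)
          ≤ E (star c * (‖star b * b‖ • (star (α k) * α k)) * c) := condexp_mono hE.1 h3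
        _ = ‖star b * b‖ • E (star c * (star (α k) * α k) * c) := by
            rw [h4, E.map_smul_of_tower]
        _ = 0 := by rw [h6, hgap, smul_zero]
    exact le_antisymm h7 (hE.1.2.2.1 _ (star_mul_self_nonneg _))
  · have hset : {x : B | ∀ b c : B, E (b * x * c) = 0}
        = ⋂ b : B, ⋂ c : B, {x : B | E (b * x * c) = 0} := by
      ext x; simp [Set.mem_iInter]
    rw [hset]
    refine isClosed_iInter fun b => isClosed_iInter fun c => ?_
    have hcont : Continuous fun x : B => E (b * x * c) :=
      E.continuous.comp <| (continuous_const.mul continuous_id).mul continuous_const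
    exact isClosed_eq hcont continuous_const
  · refine ⟨TwoSidedIdeal.mk' {x : B | ∀ b c : B, E (b * x * c) = 0}
      (by intro b c; simp)
      (fun {x y} hx hy b c => by
        have h : b * (x + y) * c = b * x * c + b * y * c := by noncomm_ring
        rw [h, map_add, hx, hy, add_zero])
      (fun {x} hx b c => by
        have h : b * (-x) * c = -(b * x * c) := by noncomm_ring
        rw [h, map_neg, hx, neg_zero])
      (fun {x y} hy b c => by
        have h : b * (x * y) * c = (b * x) * y * c := by noncomm_ring
        rw [h]; exact hy (b * x) c)
      (fun {x y} hx b c => by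
        have h : b * (x * y) * c = b * x * (y * c) := by noncomm_ring
        rw [h]; exact hx b (y * c)), ?_⟩
    exact TwoSidedIdeal.coe_mk' _ _ _ _ _ _
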